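/- For any octuple of positive integers (L,m,x,y,z,r,R,\rho), every coefficient in the power series expansion of 1/((q^x;q^m)_L (q^y;q^m)_L (q^z;q^m)_L (q^{rx+Ry+\rho z};q^m)_L) - 1/((q^{rx};q^m)_L (q^{Ry};q^m)_L (q^{\rho z};q^m)_L (q^{x+y+z};q^m)_L) is nonnegative. -/

import Mathlib

open PowerSeries Finset

namespace DominantAux

noncomputable section

/-- nonnegativity of all power series coefficients -/
def NN (f : ℚ⟦X⟧) : Prop := ∀ n, 0 ≤ PowerSeries.coeff (R := ℚ) n f

lemma NN_add {f g : ℚ⟦X⟧} (hf : NN f) (hg : NN g) : NN (f + g) := fun n => by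
  rw [map_add]; exact add_nonneg (hf n) (hg n)

lemma NN_mul {f g : ℚ⟦X⟧} (hf : NN f) (hg : NN g) : NN (f * g) := fun n => by
  rw [PowerSeries.coeff_mul]
  exact Finset.sum_nonneg fun p _ => mul_nonneg (hf _) (hg _)

lemma NN_one : NN 1 := fun n => by
  rw [PowerSeries.coeff_one]; split <;> norm_num

lemma NN_X_pow (p : ℕ) : NN ((X : ℚ⟦X⟧) ^ p) := fun n => by
  rw [PowerSeries.coeff_X_pow]; split <;> norm_num

lemma NN_sum {ι : Type*} (s : Finset ι) (f : ι → ℚ⟦X⟧) (h : ∀ i ∈ s, NN (f i)) :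
    NN (∑ i ∈ s, f i) := fun n => by
  rw [map_sum]; exact Finset.sum_nonneg fun i hi => h i hi n

lemma cc_fac (e : ℕ) (he : 0 < e) : constantCoeff (R := ℚ) (1 - X ^ e : ℚ⟦X⟧) = 1 := by
  rw [map_sub, map_one, map_pow, constantCoeff_X, zero_pow he.ne', sub_zero]

lemma fac_mul_G (e : ℕ) (he : 0 < e) :
    (1 - X ^ e : ℚ⟦X⟧) * PowerSeries.mk (fun n => if e ∣ n then (1 : ℚ) else 0) = 1 := by
  ext n
  simp only [sub_mul, one_mul, map_sub, PowerSeries.coeff_X_pow_mul', PowerSeries.coeff_mk,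
    PowerSeries.coeff_one]
  by_cases hn : n = 0
  · subst hn
    simp [show ¬ e ≤ 0 by omega, dvd_zero]
  · rw [if_neg hn]
    by_cases hle : e ≤ n
    · have hiff : e ∣ n ↔ e ∣ n - e :=
        ⟨fun hd => Nat.dvd_sub hd dvd_rfl, fun hc => by
          have h2 := Nat.dvd_add hc (dvd_rfl (a := e))
          rwa [Nat.sub_add_cancel hle] at h2⟩
      rw [if_pos hle]
      by_cases hd : e ∣ n
      · rw [if_pos hd, if_pos (hiff.mp hd), sub_self]
      · rw [if_neg hd, if_neg (fun hc => hd (hiff.mpr hc)), sub_self]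
    · rw [if_neg hle, if_neg (fun hd => hle (Nat.le_of_dvd (by omega) hd)), sub_zero]

lemma inv_fac_eq (e : ℕ) (he : 0 < e) :
    (1 - X ^ e : ℚ⟦X⟧)⁻¹ = PowerSeries.mk (fun n => if e ∣ n then (1 : ℚ) else 0) := by
  rw [PowerSeries.inv_eq_iff_mul_eq_one]
  · rw [mul_comm]; exact fac_mul_G e he
  · rw [cc_fac e he]; norm_num

lemma NN_inv_fac (e : ℕ) (he : 0 < e) : NN ((1 - X ^ e : ℚ⟦X⟧)⁻¹) := by
  rw [inv_fac_eq e he]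
  intro n
  rw [PowerSeries.coeff_mk]
  split <;> norm_num

lemma fac_inv_cancel (e : ℕ) (he : 0 < e) :
    (1 - X ^ e : ℚ⟦X⟧) * (1 - X ^ e)⁻¹ = 1 :=
  PowerSeries.mul_inv_cancel _ (by rw [cc_fac e he]; norm_num)

lemma NN_pair (e : ℕ) (he : 0 < e) : NN ((1 - X ^ e : ℚ⟦X⟧) * (1 - X ^ e)⁻¹) := by
  rw [fac_inv_cancel e he]; exact NN_one

/-- (1 - X^(c*e)) / (1 - X^e) is a nonneg geometric sum -/
lemma NN_A (c e : ℕ) (he : 0 < e) : NN ((1 - X ^ (c * e)) * (1 - X ^ e : ℚ⟦X⟧)⁻¹) := by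
  have h1 : (1 - X ^ (c * e) : ℚ⟦X⟧) = (1 - X ^ e) * ∑ i ∈ range c, (X ^ e) ^ i := by
    have h := geom_sum_mul (X ^ e : ℚ⟦X⟧) c
    have h2 : ((X : ℚ⟦X⟧) ^ e) ^ c = X ^ (c * e) := by
      rw [← pow_mul, Nat.mul_comm]
    linear_combination h + h2
  rw [h1, mul_comm (1 - X ^ e : ℚ⟦X⟧), mul_assoc, fac_inv_cancel e he, mul_one]
  refine NN_sum _ _ fun i _ => ?_
  rw [← pow_mul]
  exact NN_X_pow _

/-- (1 - X^(a+b)) / ((1-X^a)(1-X^b)) is nonneg -/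
lemma NN_B (a b : ℕ) (ha : 0 < a) (hb : 0 < b) :
    NN ((1 - X ^ (a + b)) * ((1 - X ^ a : ℚ⟦X⟧)⁻¹ * (1 - X ^ b)⁻¹)) := by
  have key : (1 - X ^ (a + b)) * ((1 - X ^ a : ℚ⟦X⟧)⁻¹ * (1 - X ^ b)⁻¹)
      = (1 - X ^ b)⁻¹ * ((1 - X ^ a) * (1 - X ^ a)⁻¹)
        + (X ^ a * (1 - X ^ a)⁻¹) * ((1 - X ^ b) * (1 - X ^ b)⁻¹) := by
    rw [pow_add]; ring
  rw [key]
  exact NN_add (NN_mul (NN_inv_fac b hb) (NN_pair a ha))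
    (NN_mul (NN_mul (NN_X_pow a) (NN_inv_fac a ha)) (NN_pair b hb))

/-- (1 - X^(c*e1 + d*e2)) / ((1-X^e1)(1-X^e2)) is nonneg -/
lemma NN_C (c d e1 e2 : ℕ) (h1 : 0 < e1) (h2 : 0 < e2) :
    NN ((1 - X ^ (c * e1 + d * e2)) * ((1 - X ^ e1 : ℚ⟦X⟧)⁻¹ * (1 - X ^ e2)⁻¹)) := by
  have key : (1 - X ^ (c * e1 + d * e2)) * ((1 - X ^ e1 : ℚ⟦X⟧)⁻¹ * (1 - X ^ e2)⁻¹)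
      = ((1 - X ^ (c * e1)) * (1 - X ^ e1)⁻¹) * (1 - X ^ e2)⁻¹
        + (X ^ (c * e1) * ((1 - X ^ (d * e2)) * (1 - X ^ e2)⁻¹)) * (1 - X ^ e1)⁻¹ := by
    rw [pow_add]; ring
  rw [key]
  exact NN_add (NN_mul (NN_A c e1 h1) (NN_inv_fac e2 h2))
    (NN_mul (NN_mul (NN_X_pow _) (NN_A d e2 h2)) (NN_inv_fac e1 h1))

/-- the basic quadruple of inverse factors -/
def ia (x y z w m j : ℕ) : ℚ⟦X⟧ :=
  (1 - X ^ (x + j * m))⁻¹ * (1 - X ^ (y + j * m))⁻¹ * (1 - X ^ (z + j * m))⁻¹ *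
    (1 - X ^ (w + j * m))⁻¹

lemma NN_ia (x y z w m j : ℕ) (hx : 0 < x) (hy : 0 < y) (hz : 0 < z) (hw : 0 < w) :
    NN (ia x y z w m j) :=
  NN_mul (NN_mul (NN_mul (NN_inv_fac _ (by omega)) (NN_inv_fac _ (by omega)))
    (NN_inv_fac _ (by omega))) (NN_inv_fac _ (by omega))

lemma NN_prod_ia (x y z w m : ℕ) (hx : 0 < x) (hy : 0 < y) (hz : 0 < z) (hw : 0 < w)
    (s : Finset ℕ) (f : ℕ → ℕ) : NN (∏ j ∈ s, ia x y z w m (f j)) := by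
  refine Finset.prod_induction _ NN (fun _ _ => NN_mul) NN_one fun j _ => ?_
  exact NN_ia x y z w m (f j) hx hy hz hw

lemma ia_mul_V (x y z w m j : ℕ) (hx : 0 < x) (hy : 0 < y) (hz : 0 < z) (hw : 0 < w) :
    ia x y z w m j *
      ((1 - X ^ (x + j * m)) * (1 - X ^ (y + j * m)) * (1 - X ^ (z + j * m)) *
        (1 - X ^ (w + j * m))) = 1 := by
  unfold ia
  calc ia x y z w m j *
      ((1 - X ^ (x + j * m)) * (1 - X ^ (y + j * m)) * (1 - X ^ (z + j * m)) *
        (1 - X ^ (w + j * m)))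
      = ((1 - X ^ (x + j * m)) * (1 - X ^ (x + j * m))⁻¹) *
        ((1 - X ^ (y + j * m)) * (1 - X ^ (y + j * m))⁻¹) *
        ((1 - X ^ (z + j * m)) * (1 - X ^ (z + j * m))⁻¹) *
        ((1 - X ^ (w + j * m)) * (1 - X ^ (w + j * m))⁻¹) := by
        unfold ia; ring
    _ = 1 := by
        rw [fac_inv_cancel _ (show 0 < x + j * m by omega),
          fac_inv_cancel _ (show 0 < y + j * m by omega),
          fac_inv_cancel _ (show 0 < z + j * m by omega),
          fac_inv_cancel _ (show 0 < w + j * m by omega)]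
        norm_num

lemma sub_inv (A B C D : ℚ⟦X⟧) (hAB : A * B = 1) (hCD : C * D = 1) :
    A - C = A * C * (D - B) := by
  calc A - C = A * (C * D) - C * (A * B) := by rw [hAB, hCD]; ring
    _ = A * C * (D - B) := by ring

/-- difference of the quadruples, in telescoped positive-piece form -/
lemma quad_diff (x y z r' R' p' m j : ℕ) (hx : 0 < x) (hy : 0 < y) (hz : 0 < z) :
    ia x y z ((r' + 1) * x + (R' + 1) * y + (p' + 1) * z) m j
      - ia ((r' + 1) * x) ((R' + 1) * y) ((p' + 1) * z) (x + y + z) m j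
    = ia x y z ((r' + 1) * x + (R' + 1) * y + (p' + 1) * z) m j *
        ia ((r' + 1) * x) ((R' + 1) * y) ((p' + 1) * z) (x + y + z) m j *
        ((X ^ (x + j * m) * ((1 - X ^ (r' * x)) * (1 - X ^ ((R' + 1) * y + (p' + 1) * z)))) *
            ((1 - X ^ (y + j * m)) * (1 - X ^ (z + j * m)))
          + (X ^ (y + j * m) * ((1 - X ^ (R' * y)) * (1 - X ^ (x + (p' + 1) * z)))) *
            ((1 - X ^ ((r' + 1) * x + j * m)) * (1 - X ^ (z + j * m)))
          + (X ^ (z + j * m) * ((1 - X ^ (p' * z)) * (1 - X ^ (x + y)))) *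
            ((1 - X ^ ((r' + 1) * x + j * m)) * (1 - X ^ ((R' + 1) * y + j * m)))) := by
  have hrx : 0 < (r' + 1) * x := Nat.mul_pos (Nat.succ_pos r') hx
  have hRy : 0 < (R' + 1) * y := Nat.mul_pos (Nat.succ_pos R') hy
  have hpz : 0 < (p' + 1) * z := Nat.mul_pos (Nat.succ_pos p') hz
  rw [sub_inv _ _ _ _
    (ia_mul_V x y z ((r' + 1) * x + (R' + 1) * y + (p' + 1) * z) m j hx hy hz (by omega))
    (ia_mul_V ((r' + 1) * x) ((R' + 1) * y) ((p' + 1) * z) (x + y + z) m j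
      (by omega) (by omega) (by omega) (by omega))]
  congr 1
  simp only [pow_add, pow_mul']
  ring

/-- the hybrid product: A-side quadruples below k, B-side quadruples from k on -/
def gg (x y z r' R' p' m L k : ℕ) : ℚ⟦X⟧ :=
  (∏ j ∈ range k, ia x y z ((r' + 1) * x + (R' + 1) * y + (p' + 1) * z) m j) *
  (∏ j ∈ Ico k L, ia ((r' + 1) * x) ((R' + 1) * y) ((p' + 1) * z) (x + y + z) m j)

lemma NN_C1 (d e1 e2 : ℕ) (h1 : 0 < e1) (h2 : 0 < e2) :
    NN ((1 - X ^ (e1 + d * e2)) * ((1 - X ^ e1 : ℚ⟦X⟧)⁻¹ * (1 - X ^ e2)⁻¹)) := by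
  have key : (1 - X ^ (e1 + d * e2)) * ((1 - X ^ e1 : ℚ⟦X⟧)⁻¹ * (1 - X ^ e2)⁻¹)
      = ((1 - X ^ e1) * (1 - X ^ e1)⁻¹) * (1 - X ^ e2)⁻¹
        + (X ^ e1 * ((1 - X ^ (d * e2)) * (1 - X ^ e2)⁻¹)) * (1 - X ^ e1)⁻¹ := by
    rw [pow_add]; ring
  rw [key]
  exact NN_add (NN_mul (NN_pair e1 h1) (NN_inv_fac e2 h2))
    (NN_mul (NN_mul (NN_X_pow _) (NN_A d e2 h2)) (NN_inv_fac e1 h1))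

lemma gg_diff (x y z r' R' p' m L k : ℕ) (hk : k < L) :
    gg x y z r' R' p' m L (k + 1) - gg x y z r' R' p' m L k
    = (∏ j ∈ range k, ia x y z ((r' + 1) * x + (R' + 1) * y + (p' + 1) * z) m j) *
      (∏ j ∈ Ico (k + 1) L, ia ((r' + 1) * x) ((R' + 1) * y) ((p' + 1) * z) (x + y + z) m j) *
      (ia x y z ((r' + 1) * x + (R' + 1) * y + (p' + 1) * z) m k
        - ia ((r' + 1) * x) ((R' + 1) * y) ((p' + 1) * z) (x + y + z) m k) := by
  unfold gg
  rw [Finset.prod_eq_prod_Ico_succ_bot hk, Finset.prod_range_succ]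
  ring

set_option maxHeartbeats 3200000 in
lemma step (x y z r' R' p' m L : ℕ) (hx : 0 < x) (hy : 0 < y) (hz : 0 < z) :
    ∀ k, k < L → NN (gg x y z r' R' p' m L (k + 1) - gg x y z r' R' p' m L k) := by
  have hrx : 0 < (r' + 1) * x := Nat.mul_pos (Nat.succ_pos r') hx
  have hRy : 0 < (R' + 1) * y := Nat.mul_pos (Nat.succ_pos R') hy
  have hpz : 0 < (p' + 1) * z := Nat.mul_pos (Nat.succ_pos p') hz
  have hw : 0 < (r' + 1) * x + (R' + 1) * y + (p' + 1) * z := by omega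
  have hv : 0 < x + y + z := by omega
  rintro (_ | i) hk
  -- case k = 0
  · have main : NN (
      (X ^ x * ((1 - X ^ (r' * x)) * (1 - (X : ℚ⟦X⟧) ^ x)⁻¹) *
        ((1 - X ^ ((R' + 1) * y + (p' + 1) * z)) *
          ((1 - X ^ ((R' + 1) * y))⁻¹ * (1 - X ^ ((p' + 1) * z))⁻¹))) *
      ((1 - X ^ ((r' + 1) * x + (R' + 1) * y + (p' + 1) * z))⁻¹ *
        ((1 - X ^ ((r' + 1) * x))⁻¹ * ((1 - X ^ (x + y + z))⁻¹ *
          ∏ j ∈ Ico 1 L, ia ((r' + 1) * x) ((R' + 1) * y) ((p' + 1) * z) (x + y + z) m j)) *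
        (((1 - X ^ y) * (1 - X ^ y)⁻¹) * ((1 - X ^ z) * (1 - X ^ z)⁻¹)))
      +
      (X ^ y * ((1 - X ^ (R' * y)) * (1 - (X : ℚ⟦X⟧) ^ y)⁻¹) *
        ((1 - X ^ (x + (p' + 1) * z)) *
          ((1 - X ^ x)⁻¹ * (1 - X ^ ((p' + 1) * z))⁻¹))) *
      ((1 - X ^ ((r' + 1) * x + (R' + 1) * y + (p' + 1) * z))⁻¹ *
        ((1 - X ^ ((R' + 1) * y))⁻¹ * ((1 - X ^ (x + y + z))⁻¹ *
          ∏ j ∈ Ico 1 L, ia ((r' + 1) * x) ((R' + 1) * y) ((p' + 1) * z) (x + y + z) m j)) *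
        (((1 - X ^ z) * (1 - X ^ z)⁻¹) *
          ((1 - X ^ ((r' + 1) * x)) * (1 - X ^ ((r' + 1) * x))⁻¹)))
      +
      (X ^ z * ((1 - X ^ (p' * z)) * (1 - (X : ℚ⟦X⟧) ^ z)⁻¹) *
        ((1 - X ^ (x + y)) * ((1 - X ^ x)⁻¹ * (1 - X ^ y)⁻¹))) *
      ((1 - X ^ ((r' + 1) * x + (R' + 1) * y + (p' + 1) * z))⁻¹ *
        ((1 - X ^ ((p' + 1) * z))⁻¹ * ((1 - X ^ (x + y + z))⁻¹ *
          ∏ j ∈ Ico 1 L, ia ((r' + 1) * x) ((R' + 1) * y) ((p' + 1) * z) (x + y + z) m j)) *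
        (((1 - X ^ ((r' + 1) * x)) * (1 - X ^ ((r' + 1) * x))⁻¹) *
          ((1 - X ^ ((R' + 1) * y)) * (1 - X ^ ((R' + 1) * y))⁻¹)))) := by
      refine NN_add (NN_add ?_ ?_) ?_
      · exact NN_mul (NN_mul (NN_mul (NN_X_pow _) (NN_A r' x hx))
          (NN_B ((R' + 1) * y) ((p' + 1) * z) hRy hpz))
          (NN_mul (NN_mul (NN_inv_fac _ hw) (NN_mul (NN_inv_fac _ hrx)
            (NN_mul (NN_inv_fac _ hv)
              (NN_prod_ia _ _ _ _ m hrx hRy hpz hv (Ico 1 L) (fun j => j)))))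
            (NN_mul (NN_pair _ hy) (NN_pair _ hz)))
      · exact NN_mul (NN_mul (NN_mul (NN_X_pow _) (NN_A R' y hy))
          (NN_B x ((p' + 1) * z) hx hpz))
          (NN_mul (NN_mul (NN_inv_fac _ hw) (NN_mul (NN_inv_fac _ hRy)
            (NN_mul (NN_inv_fac _ hv)
              (NN_prod_ia _ _ _ _ m hrx hRy hpz hv (Ico 1 L) (fun j => j)))))
            (NN_mul (NN_pair _ hz) (NN_pair _ hrx)))
      · exact NN_mul (NN_mul (NN_mul (NN_X_pow _) (NN_A p' z hz))
          (NN_B x y hx hy))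
          (NN_mul (NN_mul (NN_inv_fac _ hw) (NN_mul (NN_inv_fac _ hpz)
            (NN_mul (NN_inv_fac _ hv)
              (NN_prod_ia _ _ _ _ m hrx hRy hpz hv (Ico 1 L) (fun j => j)))))
            (NN_mul (NN_pair _ hrx) (NN_pair _ hRy)))
    convert main using 1
    rw [gg_diff x y z r' R' p' m L 0 hk, quad_diff x y z r' R' p' m 0 hx hy hz,
      Finset.prod_range_zero]
    simp only [ia, zero_mul, add_zero, zero_add]
    ring
  -- case k = i + 1
  · have main : NN (
      (X ^ (x + (i + 1) * m) * ((1 - X ^ (r' * x)) * (1 - (X : ℚ⟦X⟧) ^ x)⁻¹) *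
        ((1 - X ^ ((R' + 1) * y + (p' + 1) * z)) * ((1 - X ^ y)⁻¹ * (1 - X ^ z)⁻¹))) *
      ((1 - X ^ ((r' + 1) * x + (R' + 1) * y + (p' + 1) * z))⁻¹ *
        ((∏ j ∈ range i, ia x y z ((r' + 1) * x + (R' + 1) * y + (p' + 1) * z) m (j + 1)) *
          ((∏ j ∈ Ico (i + 1 + 1) L,
              ia ((r' + 1) * x) ((R' + 1) * y) ((p' + 1) * z) (x + y + z) m j) *
            ((1 - X ^ (x + (i + 1) * m))⁻¹ *
              (1 - X ^ ((r' + 1) * x + (R' + 1) * y + (p' + 1) * z + (i + 1) * m))⁻¹ *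
              ia ((r' + 1) * x) ((R' + 1) * y) ((p' + 1) * z) (x + y + z) m (i + 1)))) *
        (((1 - X ^ (y + (i + 1) * m)) * (1 - X ^ (y + (i + 1) * m))⁻¹) *
          ((1 - X ^ (z + (i + 1) * m)) * (1 - X ^ (z + (i + 1) * m))⁻¹)))
      +
      (X ^ (y + (i + 1) * m) * ((1 - X ^ (R' * y)) * (1 - (X : ℚ⟦X⟧) ^ y)⁻¹) *
        ((1 - X ^ (x + (p' + 1) * z)) * ((1 - X ^ x)⁻¹ * (1 - X ^ z)⁻¹))) *
      ((1 - X ^ ((r' + 1) * x + (R' + 1) * y + (p' + 1) * z))⁻¹ *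
        ((∏ j ∈ range i, ia x y z ((r' + 1) * x + (R' + 1) * y + (p' + 1) * z) m (j + 1)) *
          ((∏ j ∈ Ico (i + 1 + 1) L,
              ia ((r' + 1) * x) ((R' + 1) * y) ((p' + 1) * z) (x + y + z) m j) *
            ((1 - X ^ (x + (i + 1) * m))⁻¹ * (1 - X ^ (y + (i + 1) * m))⁻¹ *
              (1 - X ^ ((r' + 1) * x + (R' + 1) * y + (p' + 1) * z + (i + 1) * m))⁻¹ *
              ((1 - X ^ ((R' + 1) * y + (i + 1) * m))⁻¹ *
                (1 - X ^ ((p' + 1) * z + (i + 1) * m))⁻¹ *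
                (1 - X ^ (x + y + z + (i + 1) * m))⁻¹)))) *
        (((1 - X ^ (z + (i + 1) * m)) * (1 - X ^ (z + (i + 1) * m))⁻¹) *
          ((1 - X ^ ((r' + 1) * x + (i + 1) * m)) *
            (1 - X ^ ((r' + 1) * x + (i + 1) * m))⁻¹)))
      +
      (X ^ (z + (i + 1) * m) * ((1 - X ^ (p' * z)) * (1 - (X : ℚ⟦X⟧) ^ z)⁻¹) *
        ((1 - X ^ (x + y)) * ((1 - X ^ x)⁻¹ * (1 - X ^ y)⁻¹))) *
      ((1 - X ^ ((r' + 1) * x + (R' + 1) * y + (p' + 1) * z))⁻¹ *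
        ((∏ j ∈ range i, ia x y z ((r' + 1) * x + (R' + 1) * y + (p' + 1) * z) m (j + 1)) *
          ((∏ j ∈ Ico (i + 1 + 1) L,
              ia ((r' + 1) * x) ((R' + 1) * y) ((p' + 1) * z) (x + y + z) m j) *
            (ia x y z ((r' + 1) * x + (R' + 1) * y + (p' + 1) * z) m (i + 1) *
              ((1 - X ^ ((p' + 1) * z + (i + 1) * m))⁻¹ *
                (1 - X ^ (x + y + z + (i + 1) * m))⁻¹)))) *
        (((1 - X ^ ((r' + 1) * x + (i + 1) * m)) *
            (1 - X ^ ((r' + 1) * x + (i + 1) * m))⁻¹) *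
          ((1 - X ^ ((R' + 1) * y + (i + 1) * m)) *
            (1 - X ^ ((R' + 1) * y + (i + 1) * m))⁻¹)))) := by
      refine NN_add (NN_add ?_ ?_) ?_
      · exact NN_mul (NN_mul (NN_mul (NN_X_pow _) (NN_A r' x hx))
          (NN_C (R' + 1) (p' + 1) y z hy hz))
          (NN_mul (NN_mul (NN_inv_fac _ hw)
            (NN_mul (NN_prod_ia _ _ _ _ m hx hy hz hw (range i) (fun j => j + 1))
              (NN_mul (NN_prod_ia _ _ _ _ m hrx hRy hpz hv (Ico (i + 1 + 1) L) (fun j => j))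
                (NN_mul (NN_mul (NN_inv_fac _ (by omega)) (NN_inv_fac _ (by omega)))
                  (NN_ia _ _ _ _ m _ hrx hRy hpz hv)))))
            (NN_mul (NN_pair _ (by omega)) (NN_pair _ (by omega))))
      · exact NN_mul (NN_mul (NN_mul (NN_X_pow _) (NN_A R' y hy))
          (NN_C1 (p' + 1) x z hx hz))
          (NN_mul (NN_mul (NN_inv_fac _ hw)
            (NN_mul (NN_prod_ia _ _ _ _ m hx hy hz hw (range i) (fun j => j + 1))
              (NN_mul (NN_prod_ia _ _ _ _ m hrx hRy hpz hv (Ico (i + 1 + 1) L) (fun j => j))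
                (NN_mul (NN_mul (NN_mul (NN_inv_fac _ (by omega)) (NN_inv_fac _ (by omega)))
                    (NN_inv_fac _ (by omega)))
                  (NN_mul (NN_mul (NN_inv_fac _ (by omega)) (NN_inv_fac _ (by omega)))
                    (NN_inv_fac _ (by omega)))))))
            (NN_mul (NN_pair _ (by omega)) (NN_pair _ (by omega))))
      · exact NN_mul (NN_mul (NN_mul (NN_X_pow _) (NN_A p' z hz))
          (NN_B x y hx hy))
          (NN_mul (NN_mul (NN_inv_fac _ hw)
            (NN_mul (NN_prod_ia _ _ _ _ m hx hy hz hw (range i) (fun j => j + 1))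
              (NN_mul (NN_prod_ia _ _ _ _ m hrx hRy hpz hv (Ico (i + 1 + 1) L) (fun j => j))
                (NN_mul (NN_ia _ _ _ _ m _ hx hy hz hw)
                  (NN_mul (NN_inv_fac _ (by omega)) (NN_inv_fac _ (by omega)))))))
            (NN_mul (NN_pair _ (by omega)) (NN_pair _ (by omega))))
    convert main using 1
    rw [gg_diff x y z r' R' p' m L (i + 1) hk, quad_diff x y z r' R' p' m (i + 1) hx hy hz,
      Finset.prod_range_succ']
    simp only [ia, zero_mul, add_zero, zero_add]
    ring

lemma inv_prod (s : Finset ℕ) (f : ℕ → ℚ⟦X⟧) :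
    (∏ i ∈ s, f i)⁻¹ = ∏ i ∈ s, (f i)⁻¹ := by
  induction s using Finset.cons_induction with
  | empty => simp
  | cons a s ha ih =>
      rw [Finset.prod_cons, Finset.prod_cons, PowerSeries.mul_inv_rev, ih, mul_comm]

lemma bridge (x y z w m L : ℕ) :
    ∏ j ∈ range L, ia x y z w m j
      = (∏ j ∈ range L, (1 - (X : ℚ⟦X⟧) ^ (x + j * m)))⁻¹ *
        (∏ j ∈ range L, (1 - (X : ℚ⟦X⟧) ^ (y + j * m)))⁻¹ *
        (∏ j ∈ range L, (1 - (X : ℚ⟦X⟧) ^ (z + j * m)))⁻¹ *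
        (∏ j ∈ range L, (1 - (X : ℚ⟦X⟧) ^ (w + j * m)))⁻¹ := by
  simp only [ia, Finset.prod_mul_distrib]
  rw [← inv_prod, ← inv_prod, ← inv_prod, ← inv_prod]

end

end DominantAux

theorem dominant_xyz (L m x y z r R ρ : ℕ) (hL : 0 < L) (hm : 0 < m)
    (hx : 0 < x) (hy : 0 < y) (hz : 0 < z)
    (hr : 0 < r) (hR : 0 < R) (hρ : 0 < ρ) (n : ℕ) :
    0 ≤ PowerSeries.coeff (R := ℚ) n
      ((∏ j ∈ range L, (1 - (X : ℚ⟦X⟧) ^ (x + j * m)))⁻¹ *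
        (∏ j ∈ range L, (1 - (X : ℚ⟦X⟧) ^ (y + j * m)))⁻¹ *
        (∏ j ∈ range L, (1 - (X : ℚ⟦X⟧) ^ (z + j * m)))⁻¹ *
        (∏ j ∈ range L, (1 - (X : ℚ⟦X⟧) ^ (r * x + R * y + ρ * z + j * m)))⁻¹ -
       (∏ j ∈ range L, (1 - (X : ℚ⟦X⟧) ^ (r * x + j * m)))⁻¹ *
        (∏ j ∈ range L, (1 - (X : ℚ⟦X⟧) ^ (R * y + j * m)))⁻¹ *
        (∏ j ∈ range L, (1 - (X : ℚ⟦X⟧) ^ (ρ * z + j * m)))⁻¹ *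
        (∏ j ∈ range L, (1 - (X : ℚ⟦X⟧) ^ (x + y + z + j * m)))⁻¹) := by
  obtain ⟨r', rfl⟩ : ∃ k, r = k + 1 := ⟨r - 1, by omega⟩
  obtain ⟨R', rfl⟩ : ∃ k, R = k + 1 := ⟨R - 1, by omega⟩
  obtain ⟨p', rfl⟩ : ∃ k, ρ = k + 1 := ⟨ρ - 1, by omega⟩
  have e1 : DominantAux.gg x y z r' R' p' m L L
      = (∏ j ∈ range L, (1 - (X : ℚ⟦X⟧) ^ (x + j * m)))⁻¹ *
        (∏ j ∈ range L, (1 - (X : ℚ⟦X⟧) ^ (y + j * m)))⁻¹ *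
        (∏ j ∈ range L, (1 - (X : ℚ⟦X⟧) ^ (z + j * m)))⁻¹ *
        (∏ j ∈ range L,
          (1 - (X : ℚ⟦X⟧) ^ ((r' + 1) * x + (R' + 1) * y + (p' + 1) * z + j * m)))⁻¹ := by
    unfold DominantAux.gg
    rw [Finset.Ico_self, Finset.prod_empty, mul_one]
    exact DominantAux.bridge x y z ((r' + 1) * x + (R' + 1) * y + (p' + 1) * z) m L
  have e0 : DominantAux.gg x y z r' R' p' m L 0
      = (∏ j ∈ range L, (1 - (X : ℚ⟦X⟧) ^ ((r' + 1) * x + j * m)))⁻¹ *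
        (∏ j ∈ range L, (1 - (X : ℚ⟦X⟧) ^ ((R' + 1) * y + j * m)))⁻¹ *
        (∏ j ∈ range L, (1 - (X : ℚ⟦X⟧) ^ ((p' + 1) * z + j * m)))⁻¹ *
        (∏ j ∈ range L, (1 - (X : ℚ⟦X⟧) ^ (x + y + z + j * m)))⁻¹ := by
    unfold DominantAux.gg
    rw [Finset.prod_range_zero, one_mul, ← Finset.range_eq_Ico]
    exact DominantAux.bridge ((r' + 1) * x) ((R' + 1) * y) ((p' + 1) * z) (x + y + z) m L
  rw [← e1, ← e0, ← Finset.sum_range_sub (DominantAux.gg x y z r' R' p' m L) L]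
  exact DominantAux.NN_sum _ _
    (fun k hk => DominantAux.step x y z r' R' p' m L hx hy hz k (Finset.mem_range.mp hk)) n
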